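/- For every natural number n and every complex number c, the function u : ℝ² → ℝ defined by u(x,y) ≔ Re( c · (1 − 2·(x² + y²)/((n+1)·(1 + x² + y²))) · (x + iy)ⁿ ) satisfies Δu + 8·u/(1 + x² + y²)² = 0 at every point of ℝ². -/

import Mathlib

/-- Partial derivative in `x` of a function of two real variables. -/
noncomputable def pdx (f : ℝ × ℝ → ℝ) (p : ℝ × ℝ) : ℝ := fderiv ℝ f p (1, 0)

/-- Partial derivative in `y` of a function of two real variables. -/
noncomputable def pdy (f : ℝ × ℝ → ℝ) (p : ℝ × ℝ) : ℝ := fderiv ℝ f p (0, 1)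

/-- Laplacian of a function of two real variables. -/
noncomputable def lap (f : ℝ × ℝ → ℝ) (p : ℝ × ℝ) : ℝ := pdx (pdx f) p + pdy (pdy f) p

open Complex

noncomputable def Gf (A t : ℝ) : ℝ := 1 - 2*t/(A*(1+t))
noncomputable def Pf (A t : ℝ) : ℝ := -2/(A*(1+t)^2)
noncomputable def Qf (A t : ℝ) : ℝ := 4/(A*(1+t)^3)

lemma hasDerivAt_Gf {A t : ℝ} (hA : A ≠ 0) (ht : 1+t ≠ 0) : HasDerivAt (Gf A) (Pf A t) t := by
  have h1 : HasDerivAt (fun t : ℝ => 2*t) 2 t := by simpa using (hasDerivAt_id t).const_mul 2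
  have h2 : HasDerivAt (fun t : ℝ => A*(1+t)) A t := by
    simpa using ((hasDerivAt_id t).const_add 1).const_mul A
  have hden : A*(1+t) ≠ 0 := mul_ne_zero hA ht
  have h := (hasDerivAt_const t (1:ℝ)).sub (h1.div h2 hden)
  have hval : (0:ℝ) - ((2 * (A*(1+t)) - 2*t*A)/(A*(1+t))^2) = Pf A t := by
    unfold Pf; field_simp; ring
  rw [hval] at h
  exact h

lemma hasDerivAt_Pf {A t : ℝ} (hA : A ≠ 0) (ht : 1+t ≠ 0) : HasDerivAt (Pf A) (Qf A t) t := by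
  have hden : HasDerivAt (fun t : ℝ => A*(1+t)^2) (A*(2*(1+t))) t := by
    have := (((hasDerivAt_id t).const_add 1).pow 2).const_mul A
    refine this.congr_deriv ?_
    norm_num
  have hne : A*(1+t)^2 ≠ 0 := mul_ne_zero hA (pow_ne_zero 2 ht)
  have h := (hasDerivAt_const t (-2:ℝ)).div hden hne
  have hval : ((0 * (A*(1+t)^2) - (-2) * (A*(2*(1+t))))/(A*(1+t)^2)^2) = Qf A t := by
    unfold Qf; field_simp; ring
  rw [hval] at h
  exact h

lemma HasDerivAt.re_comp {f : ℝ → ℂ} {f' : ℂ} {x : ℝ} (h : HasDerivAt f f' x) :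
    HasDerivAt (fun t => (f t).re) f'.re x := by
  simpa [Function.comp_def] using Complex.reCLM.hasFDerivAt.comp_hasDerivAt x h

lemma core_x (c K : ℂ) (m : ℕ) {q : ℝ → ℝ} {q' x : ℝ} (y : ℝ) (hq : HasDerivAt q q' x) :
    HasDerivAt (fun t : ℝ => c * ((q t : ℝ) : ℂ) * ((t : ℂ) + (y:ℝ) * Complex.I) ^ m * K)
      ((c * (q' : ℂ) * ((x:ℂ) + y*Complex.I) ^ m
        + c * ((q x : ℝ):ℂ) * ((m:ℂ) * ((x:ℂ) + y*Complex.I) ^ (m-1))) * K) x := by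
  have hz : HasDerivAt (fun t : ℝ => (t:ℂ) + (y:ℝ)*Complex.I) 1 x := by
    simpa using (Complex.ofRealCLM.hasDerivAt (x := x)).add_const ((y:ℝ)*Complex.I)
  have hzm : HasDerivAt (fun t : ℝ => ((t:ℂ) + (y:ℝ)*Complex.I)^m)
      ((m:ℂ) * ((x:ℂ) + y*Complex.I)^(m-1) * 1) x := by
    simpa [Function.comp_def] using HasDerivAt.comp x (hasDerivAt_pow m ((x:ℂ) + y*Complex.I)) hz
  have hqc : HasDerivAt (fun t : ℝ => ((q t : ℝ):ℂ)) (q' : ℂ) x := hq.ofReal_comp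
  have h := ((hqc.const_mul c).mul hzm).mul_const K
  refine h.congr_deriv ?_
  ring

lemma core_y (c K : ℂ) (m : ℕ) {q : ℝ → ℝ} {q' y : ℝ} (x : ℝ) (hq : HasDerivAt q q' y) :
    HasDerivAt (fun t : ℝ => c * ((q t : ℝ) : ℂ) * ((x : ℂ) + (t:ℝ) * Complex.I) ^ m * K)
      ((c * (q' : ℂ) * ((x:ℂ) + y*Complex.I) ^ m
        + c * ((q y : ℝ):ℂ) * ((m:ℂ) * ((x:ℂ) + y*Complex.I) ^ (m-1) * Complex.I)) * K) y := by
  have hz : HasDerivAt (fun t : ℝ => (x:ℂ) + (t:ℝ)*Complex.I) Complex.I y := by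
    simpa using ((Complex.ofRealCLM.hasDerivAt (x := y)).mul_const Complex.I).const_add ((x:ℝ):ℂ)
  have hzm : HasDerivAt (fun t : ℝ => ((x:ℂ) + (t:ℝ)*Complex.I)^m)
      ((m:ℂ) * ((x:ℂ) + y*Complex.I)^(m-1) * Complex.I) y := by
    simpa [Function.comp_def] using HasDerivAt.comp y (hasDerivAt_pow m ((x:ℂ) + (y:ℝ)*Complex.I)) hz
  have hqc : HasDerivAt (fun t : ℝ => ((q t : ℝ):ℂ)) (q' : ℂ) y := hq.ofReal_comp
  exact ((hqc.const_mul c).mul hzm).mul_const K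

lemma pdx_eq {f : ℝ × ℝ → ℝ} {p : ℝ × ℝ} {a : ℝ} (hd : DifferentiableAt ℝ f p)
    (h : HasDerivAt (fun x => f (x, p.2)) a p.1) : pdx f p = a := by
  have hl : HasDerivAt (fun x : ℝ => (x, p.2)) ((1:ℝ), (0:ℝ)) p.1 :=
    (hasDerivAt_id p.1).prodMk (hasDerivAt_const p.1 p.2)
  have h2 : HasDerivAt (fun x => f (x, p.2)) (fderiv ℝ f p (1, 0)) p.1 := by
    simpa [Function.comp_def] using hd.hasFDerivAt.comp_hasDerivAt p.1 hl
  exact h2.unique h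

lemma pdy_eq {f : ℝ × ℝ → ℝ} {p : ℝ × ℝ} {a : ℝ} (hd : DifferentiableAt ℝ f p)
    (h : HasDerivAt (fun y => f (p.1, y)) a p.2) : pdy f p = a := by
  have hl : HasDerivAt (fun y : ℝ => (p.1, y)) ((0:ℝ), (1:ℝ)) p.2 :=
    (hasDerivAt_const p.2 p.1).prodMk (hasDerivAt_id p.2)
  have h2 : HasDerivAt (fun y => f (p.1, y)) (fderiv ℝ f p (0, 1)) p.2 := by
    simpa [Function.comp_def] using hd.hasFDerivAt.comp_hasDerivAt p.2 hl
  exact h2.unique h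

lemma diffAt_core {r : ℝ × ℝ → ℝ} {p : ℝ × ℝ} (c K : ℂ) (m : ℕ) (hr : DifferentiableAt ℝ r p) :
    DifferentiableAt ℝ (fun p : ℝ × ℝ => c * ((r p : ℝ):ℂ) * ((p.1:ℂ) + (p.2:ℝ)*Complex.I)^m * K) p := by
  have hZ : DifferentiableAt ℝ (fun p : ℝ × ℝ => (p.1:ℂ) + (p.2:ℝ)*Complex.I) p := by
    apply DifferentiableAt.add
    · exact Complex.ofRealCLM.differentiable.differentiableAt.comp p differentiableAt_fst
    · exact (Complex.ofRealCLM.differentiable.differentiableAt.comp p differentiableAt_snd).mul_const _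
  exact (((Complex.ofRealCLM.differentiable.differentiableAt.comp p hr).const_mul c).mul (hZ.pow m)).mul_const K

set_option maxHeartbeats 1000000 in
lemma key (n : ℕ) (c : ℂ) (x y : ℝ) :
    ((c * ((Qf ((n:ℝ)+1) (x^2+y^2)*(2*x)*(2*x) + Pf ((n:ℝ)+1) (x^2+y^2)*2 : ℝ):ℂ)
          * ((x:ℂ)+(y:ℝ)*Complex.I)^n
        + c * ((Pf ((n:ℝ)+1) (x^2+y^2)*(2*x) : ℝ):ℂ)
          * ((n:ℂ) * ((x:ℂ)+(y:ℝ)*Complex.I)^(n-1))) * 1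
      + (c * ((Pf ((n:ℝ)+1) (x^2+y^2)*(2*x) : ℝ):ℂ) * ((x:ℂ)+(y:ℝ)*Complex.I)^(n-1)
        + c * ((Gf ((n:ℝ)+1) (x^2+y^2) : ℝ):ℂ)
          * (((n-1 : ℕ):ℂ) * ((x:ℂ)+(y:ℝ)*Complex.I)^(n-1-1))) * (n:ℂ))
    + ((c * ((Qf ((n:ℝ)+1) (x^2+y^2)*(2*y)*(2*y) + Pf ((n:ℝ)+1) (x^2+y^2)*2 : ℝ):ℂ)
          * ((x:ℂ)+(y:ℝ)*Complex.I)^n) * 1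
      + c * ((Pf ((n:ℝ)+1) (x^2+y^2)*(2*y) : ℝ):ℂ)
          * ((n:ℂ) * ((x:ℂ)+(y:ℝ)*Complex.I)^(n-1) * Complex.I)
      + c * ((Pf ((n:ℝ)+1) (x^2+y^2)*(2*y) : ℝ):ℂ) * ((x:ℂ)+(y:ℝ)*Complex.I)^(n-1)
          * ((n:ℂ) * Complex.I)
      - c * ((Gf ((n:ℝ)+1) (x^2+y^2) : ℝ):ℂ)
          * (((n-1 : ℕ):ℂ) * ((x:ℂ)+(y:ℝ)*Complex.I)^(n-1-1)) * (n:ℂ))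
    + ((8/(1+x^2+y^2)^2 : ℝ) : ℂ)
        * (c * ((Gf ((n:ℝ)+1) (x^2+y^2) : ℝ):ℂ) * ((x:ℂ)+(y:ℝ)*Complex.I)^n * 1) = 0 := by
  have hA : ((n:ℝ)+1) ≠ 0 := by positivity
  have hTr : (1+x^2+y^2 : ℝ) ≠ 0 := by positivity
  have hreal : Qf ((n:ℝ)+1) (x^2+y^2) * (4*(x^2+y^2)) + 4*Pf ((n:ℝ)+1) (x^2+y^2)
      + 4*(n:ℝ)*Pf ((n:ℝ)+1) (x^2+y^2) + 8*Gf ((n:ℝ)+1) (x^2+y^2)/(1+x^2+y^2)^2 = 0 := by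
    simp only [Gf, Pf, Qf]
    have h1 : (1 + (x^2+y^2) : ℝ) ≠ 0 := by positivity
    field_simp
    ring
  have hC := congrArg (Complex.ofReal) hreal
  push_cast at hC
  rcases n with _ | _ | m
  · push_cast at hC ⊢
    linear_combination (c * ((x:ℂ)+(y:ℝ)*Complex.I)^0) * hC
  · push_cast at hC ⊢
    linear_combination (c * ((x:ℂ)+(y:ℝ)*Complex.I)^1) * hC
  · simp only [show m+2-1 = m+1 from rfl, show m+1-1 = m from rfl]
    push_cast at hC ⊢
    linear_combination (c * ((x:ℂ)+(y:ℝ)*Complex.I)^(m+2)) * hC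


noncomputable def Uf (n : ℕ) (c : ℂ) (p : ℝ × ℝ) : ℝ :=
  (c * ((Gf ((n:ℝ)+1) (p.1^2+p.2^2) : ℝ):ℂ) * ((p.1:ℂ) + (p.2:ℝ)*Complex.I)^n * 1).re

noncomputable def V1f (n : ℕ) (c : ℂ) (p : ℝ × ℝ) : ℝ :=
  (c * ((Pf ((n:ℝ)+1) (p.1^2+p.2^2) * (2*p.1) : ℝ):ℂ) * ((p.1:ℂ)+(p.2:ℝ)*Complex.I)^n * 1
   + c * ((Gf ((n:ℝ)+1) (p.1^2+p.2^2) : ℝ):ℂ) * ((p.1:ℂ)+(p.2:ℝ)*Complex.I)^(n-1) * (n:ℂ)).re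

noncomputable def V2f (n : ℕ) (c : ℂ) (p : ℝ × ℝ) : ℝ :=
  (c * ((Pf ((n:ℝ)+1) (p.1^2+p.2^2) * (2*p.2) : ℝ):ℂ) * ((p.1:ℂ)+(p.2:ℝ)*Complex.I)^n * 1
   + c * ((Gf ((n:ℝ)+1) (p.1^2+p.2^2) : ℝ):ℂ) * ((p.1:ℂ)+(p.2:ℝ)*Complex.I)^(n-1) * ((n:ℂ)*Complex.I)).re

lemma h1x (x y : ℝ) : HasDerivAt (fun t : ℝ => t^2+y^2) (2*x) x := by
  simpa using (hasDerivAt_pow 2 x).add_const (y^2)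

lemma h1y (x y : ℝ) : HasDerivAt (fun t : ℝ => x^2+t^2) (2*y) y := by
  simpa using (hasDerivAt_pow 2 y).const_add (x^2)

lemma hGx (n : ℕ) (x y : ℝ) : HasDerivAt (fun t : ℝ => Gf ((n:ℝ)+1) (t^2+y^2))
    (Pf ((n:ℝ)+1) (x^2+y^2) * (2*x)) x := by
  have hA : ((n:ℝ)+1) ≠ 0 := by positivity
  have hT : (1 + (x^2+y^2) : ℝ) ≠ 0 := by positivity
  simpa [Function.comp_def] using (hasDerivAt_Gf hA hT).comp x (h1x x y)

lemma hGy (n : ℕ) (x y : ℝ) : HasDerivAt (fun t : ℝ => Gf ((n:ℝ)+1) (x^2+t^2))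
    (Pf ((n:ℝ)+1) (x^2+y^2) * (2*y)) y := by
  have hA : ((n:ℝ)+1) ≠ 0 := by positivity
  have hT : (1 + (x^2+y^2) : ℝ) ≠ 0 := by positivity
  simpa [Function.comp_def] using (hasDerivAt_Gf hA hT).comp y (h1y x y)

lemma hq1x (n : ℕ) (x y : ℝ) : HasDerivAt (fun t : ℝ => Pf ((n:ℝ)+1) (t^2+y^2) * (2*t))
    (Qf ((n:ℝ)+1) (x^2+y^2)*(2*x)*(2*x) + Pf ((n:ℝ)+1) (x^2+y^2)*2) x := by
  have hA : ((n:ℝ)+1) ≠ 0 := by positivity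
  have hT : (1 + (x^2+y^2) : ℝ) ≠ 0 := by positivity
  have hP : HasDerivAt (fun t : ℝ => Pf ((n:ℝ)+1) (t^2+y^2))
      (Qf ((n:ℝ)+1) (x^2+y^2) * (2*x)) x := by
    simpa [Function.comp_def] using (hasDerivAt_Pf hA hT).comp x (h1x x y)
  have h2 : HasDerivAt (fun t : ℝ => 2*t) 2 x := by simpa using (hasDerivAt_id x).const_mul 2
  exact hP.mul h2

lemma hq1y (n : ℕ) (x y : ℝ) : HasDerivAt (fun t : ℝ => Pf ((n:ℝ)+1) (x^2+t^2) * (2*t))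
    (Qf ((n:ℝ)+1) (x^2+y^2)*(2*y)*(2*y) + Pf ((n:ℝ)+1) (x^2+y^2)*2) y := by
  have hA : ((n:ℝ)+1) ≠ 0 := by positivity
  have hT : (1 + (x^2+y^2) : ℝ) ≠ 0 := by positivity
  have hP : HasDerivAt (fun t : ℝ => Pf ((n:ℝ)+1) (x^2+t^2))
      (Qf ((n:ℝ)+1) (x^2+y^2) * (2*y)) y := by
    simpa [Function.comp_def] using (hasDerivAt_Pf hA hT).comp y (h1y x y)
  have h2 : HasDerivAt (fun t : ℝ => 2*t) 2 y := by simpa using (hasDerivAt_id y).const_mul 2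
  exact hP.mul h2

lemma hrG (n : ℕ) (x y : ℝ) :
    DifferentiableAt ℝ (fun p : ℝ × ℝ => Gf ((n:ℝ)+1) (p.1^2+p.2^2)) (x, y) := by
  have hA : ((n:ℝ)+1) ≠ 0 := by positivity
  have hT : (1 + (x^2+y^2) : ℝ) ≠ 0 := by positivity
  exact (hasDerivAt_Gf hA hT).differentiableAt.comp (f := fun p : ℝ × ℝ => p.1^2+p.2^2) (x, y) (by fun_prop)

lemma hrP (n : ℕ) (x y : ℝ) :
    DifferentiableAt ℝ (fun p : ℝ × ℝ => Pf ((n:ℝ)+1) (p.1^2+p.2^2) * (2*p.1)) (x, y) := by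
  have hA : ((n:ℝ)+1) ≠ 0 := by positivity
  have hT : (1 + (x^2+y^2) : ℝ) ≠ 0 := by positivity
  exact ((hasDerivAt_Pf hA hT).differentiableAt.comp (f := fun p : ℝ × ℝ => p.1^2+p.2^2) (x, y) (by fun_prop)).mul (by fun_prop)

lemma hrP2 (n : ℕ) (x y : ℝ) :
    DifferentiableAt ℝ (fun p : ℝ × ℝ => Pf ((n:ℝ)+1) (p.1^2+p.2^2) * (2*p.2)) (x, y) := by
  have hA : ((n:ℝ)+1) ≠ 0 := by positivity
  have hT : (1 + (x^2+y^2) : ℝ) ≠ 0 := by positivity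
  exact ((hasDerivAt_Pf hA hT).differentiableAt.comp (f := fun p : ℝ × ℝ => p.1^2+p.2^2) (x, y) (by fun_prop)).mul (by fun_prop)

lemma pdxU (n : ℕ) (c : ℂ) : pdx (Uf n c) = V1f n c := by
  funext q
  obtain ⟨x, y⟩ := q
  have hd : DifferentiableAt ℝ (Uf n c) (x, y) :=
    (Complex.reCLM.differentiable.differentiableAt).comp (x, y) (diffAt_core c 1 n (hrG n x y))
  have hder := (core_x c 1 n y (hGx n x y)).re_comp
  refine (pdx_eq hd hder).trans (congrArg Complex.re ?_)
  ring

lemma pdyU (n : ℕ) (c : ℂ) : pdy (Uf n c) = V2f n c := by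
  funext q
  obtain ⟨x, y⟩ := q
  have hd : DifferentiableAt ℝ (Uf n c) (x, y) :=
    (Complex.reCLM.differentiable.differentiableAt).comp (x, y) (diffAt_core c 1 n (hrG n x y))
  have hder := (core_y c 1 n x (hGy n x y)).re_comp
  refine (pdy_eq hd hder).trans (congrArg Complex.re ?_)
  ring

theorem mode_solutions_kappa_one (n : ℕ) (c : ℂ) :
    letI u : ℝ × ℝ → ℝ := fun p =>
      (c * (((1 - 2 * (p.1 ^ 2 + p.2 ^ 2) / (((n : ℝ) + 1) * (1 + p.1 ^ 2 + p.2 ^ 2))) : ℝ) : ℂ)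
        * ((p.1 : ℂ) + (p.2 : ℂ) * Complex.I) ^ n).re
    ∀ p : ℝ × ℝ, lap u p + 8 * u p / (1 + p.1 ^ 2 + p.2 ^ 2) ^ 2 = 0 := by
  intro p0
  obtain ⟨x, y⟩ := p0
  have hu : (fun p : ℝ × ℝ =>
      (c * (((1 - 2 * (p.1 ^ 2 + p.2 ^ 2) / (((n : ℝ) + 1) * (1 + p.1 ^ 2 + p.2 ^ 2))) : ℝ) : ℂ)
        * ((p.1 : ℂ) + (p.2 : ℂ) * Complex.I) ^ n).re) = Uf n c := by
    funext q
    have h : (1 - 2 * (q.1 ^ 2 + q.2 ^ 2) / (((n : ℝ) + 1) * (1 + q.1 ^ 2 + q.2 ^ 2)) : ℝ)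
        = Gf ((n:ℝ)+1) (q.1^2+q.2^2) := by
      rw [Gf]; ring_nf
    rw [h, Uf, mul_one]
  rw [hu]
  -- second derivatives
  have hd1 : DifferentiableAt ℝ (V1f n c) (x, y) :=
    (Complex.reCLM.differentiable.differentiableAt).comp (x, y)
      ((diffAt_core c 1 n (hrP n x y)).add (diffAt_core c (n:ℂ) (n-1) (hrG n x y)))
  have hd2 : DifferentiableAt ℝ (V2f n c) (x, y) :=
    (Complex.reCLM.differentiable.differentiableAt).comp (x, y)
      ((diffAt_core c 1 n (hrP2 n x y)).add
        (diffAt_core c ((n:ℂ)*Complex.I) (n-1) (hrG n x y)))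
  have h3 := pdx_eq hd1 ((core_x c 1 n y (hq1x n x y)).add
      (core_x c (n:ℂ) (n-1) y (hGx n x y))).re_comp
  have h4 := pdy_eq hd2 ((core_y c 1 n x (hq1y n x y)).add
      (core_y c ((n:ℂ)*Complex.I) (n-1) x (hGy n x y))).re_comp
  have h4' : pdy (V2f n c) (x, y)
      = ((c * ((Qf ((n:ℝ)+1) (x^2+y^2)*(2*y)*(2*y) + Pf ((n:ℝ)+1) (x^2+y^2)*2 : ℝ):ℂ)
          * ((x:ℂ)+(y:ℝ)*Complex.I)^n) * 1
        + c * ((Pf ((n:ℝ)+1) (x^2+y^2)*(2*y) : ℝ):ℂ)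
            * ((n:ℂ) * ((x:ℂ)+(y:ℝ)*Complex.I)^(n-1) * Complex.I)
        + c * ((Pf ((n:ℝ)+1) (x^2+y^2)*(2*y) : ℝ):ℂ) * ((x:ℂ)+(y:ℝ)*Complex.I)^(n-1)
            * ((n:ℂ) * Complex.I)
        - c * ((Gf ((n:ℝ)+1) (x^2+y^2) : ℝ):ℂ)
            * (((n-1 : ℕ):ℂ) * ((x:ℂ)+(y:ℝ)*Complex.I)^(n-1-1)) * (n:ℂ)).re := by
    refine h4.trans (congrArg Complex.re ?_)
    linear_combination (c * ((Gf ((n:ℝ)+1) (x^2+y^2) : ℝ):ℂ)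
      * (((n-1 : ℕ):ℂ) * ((x:ℂ)+(y:ℝ)*Complex.I)^(n-1-1)) * (n:ℂ)) * Complex.I_sq
  have h0 : 8 * Uf n c (x, y) / (1+x^2+y^2)^2
      = (((8/(1+x^2+y^2)^2 : ℝ):ℂ) * (c * ((Gf ((n:ℝ)+1) (x^2+y^2) : ℝ):ℂ)
          * ((x:ℂ)+(y:ℝ)*Complex.I)^n * 1)).re := by
    rw [Complex.re_ofReal_mul]
    show 8 * (c * ((Gf ((n:ℝ)+1) (x^2+y^2) : ℝ):ℂ) * ((x:ℂ)+(y:ℝ)*Complex.I)^n * 1).re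
        / (1+x^2+y^2)^2 = _
    ring
  show pdx (pdx (Uf n c)) (x, y) + pdy (pdy (Uf n c)) (x, y)
      + 8 * Uf n c (x, y) / (1+x^2+y^2)^2 = 0
  rw [pdxU, pdyU, h3, h4', h0, ← Complex.add_re, ← Complex.add_re, key n c x y]
  simp
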